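/- Let M be a set, F a real Hilbert space, Φ : M → F a map, and let d(x,y) = ‖Φ(x) − Φ(y)‖_F be the induced Hilbertian pseudo-distance. Then for every γ ≥ 0 and every β ∈ [0,1], the function K(x,y) = exp(−γ · d(x,y)^{2β}) is a positive definite kernel on M: for every n ∈ ℕ, all x_1, …, x_n ∈ M and all c ∈ ℝ^n, Σ_{i,j=1}^n cᵢ cⱼ K(xᵢ, xⱼ) ≥ 0. -/

import Mathlib

open Finset Real MeasureTheory Filter Set

/-- quadratic-form positivity of a kernel on `Fin n` -/
private def QuadPos {n : ℕ} (K : Fin n → Fin n → ℝ) : Prop :=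
  ∀ c : Fin n → ℝ, 0 ≤ ∑ i, ∑ j, c i * c j * K i j

private lemma quadpos_schur {n : ℕ} {K L : Fin n → Fin n → ℝ} (hKsym : ∀ i j, K i j = K j i)
    (hK : QuadPos K) (hL : QuadPos L) : QuadPos (fun i j => K i j * L i j) := by
  have hpsd : (Matrix.of K).PosSemidef := by
    constructor
    · ext i j
      simpa [Matrix.conjTranspose] using hKsym j i
    · intro x
      have h := hK x
      have : ∀ i, x i * ∑ j, K i j * x j = ∑ j, x i * x j * K i j := by
        intro i; rw [Finset.mul_sum]; exact Finset.sum_congr rfl fun j _ => by ring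
      simpa [Finsupp.sum_fintype, mul_comm, mul_left_comm, mul_assoc] using h
  obtain ⟨B, hB⟩ : ∃ B : Matrix (Fin n) (Fin n) ℝ, Matrix.of K = B.conjTranspose * B := by
    open scoped MatrixOrder Matrix.Norms.L2Operator in
    exact CStarAlgebra.nonneg_iff_eq_star_mul_self.mp hpsd.nonneg
  have hKrep : ∀ i j, K i j = ∑ k, B k i * B k j := by
    intro i j
    have := congrArg (fun M => M i j) hB
    simpa [Matrix.mul_apply, Matrix.conjTranspose_apply] using this
  intro c
  have key : ∑ i, ∑ j, c i * c j * (K i j * L i j)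
      = ∑ k, ∑ i, ∑ j, (c i * B k i) * (c j * B k j) * L i j :=
    calc ∑ i, ∑ j, c i * c j * (K i j * L i j)
        = ∑ i, ∑ j, ∑ k, (c i * B k i) * (c j * B k j) * L i j := by
          refine Finset.sum_congr rfl fun i _ => Finset.sum_congr rfl fun j _ => ?_
          rw [hKrep i j, Finset.sum_mul, Finset.mul_sum]
          exact Finset.sum_congr rfl fun k _ => by ring
      _ = ∑ i, ∑ k, ∑ j, (c i * B k i) * (c j * B k j) * L i j :=
          Finset.sum_congr rfl fun i _ => Finset.sum_comm
      _ = ∑ k, ∑ i, ∑ j, (c i * B k i) * (c j * B k j) * L i j := Finset.sum_comm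
  rw [key]
  exact Finset.sum_nonneg fun k _ => hL fun i => c i * B k i

private lemma quadpos_pow {n : ℕ} {K : Fin n → Fin n → ℝ} (hKsym : ∀ i j, K i j = K j i)
    (hK : QuadPos K) (m : ℕ) : QuadPos (fun i j => K i j ^ m) := by
  induction m with
  | zero =>
    intro c
    show 0 ≤ ∑ i, ∑ j, c i * c j * K i j ^ 0
    have h0 : ∑ i, ∑ j, c i * c j * K i j ^ 0 = (∑ i, c i) * (∑ j, c j) := by
      rw [Finset.sum_mul_sum]
      simp
    rw [h0]
    exact mul_self_nonneg _
  | succ m ih =>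
    have := quadpos_schur hKsym hK ih
    intro c
    simpa [pow_succ, mul_comm] using this c

private lemma quadpos_exp {n : ℕ} {K : Fin n → Fin n → ℝ} (hKsym : ∀ i j, K i j = K j i)
    (hK : QuadPos K) : QuadPos (fun i j => Real.exp (K i j)) := by
  intro c
  have htd : ∀ i j : Fin n,
      Tendsto (fun N => ∑ m ∈ Finset.range N, c i * c j * (K i j ^ m / m.factorial))
        atTop (nhds (c i * c j * Real.exp (K i j))) := by
    intro i j
    have h1 : HasSum (fun m : ℕ => K i j ^ m / m.factorial) (Real.exp (K i j)) :=
      Real.exp_eq_exp_ℝ ▸ (NormedSpace.expSeries_div_hasSum_exp (K i j))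
    exact (h1.tendsto_sum_nat.const_mul _).congr fun N => by rw [Finset.mul_sum]
  have htd2 : Tendsto
      (fun N => ∑ i, ∑ j, ∑ m ∈ Finset.range N, c i * c j * (K i j ^ m / m.factorial))
      atTop (nhds (∑ i, ∑ j, c i * c j * Real.exp (K i j))) := by
    refine tendsto_finset_sum _ fun i _ => tendsto_finset_sum _ fun j _ => htd i j
  refine ge_of_tendsto' htd2 fun N => ?_
  have hEq : ∑ i, ∑ j, ∑ m ∈ Finset.range N, c i * c j * (K i j ^ m / m.factorial)
      = ∑ m ∈ Finset.range N, (1 / (m.factorial : ℝ)) * ∑ i, ∑ j, c i * c j * K i j ^ m :=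
    calc ∑ i, ∑ j, ∑ m ∈ Finset.range N, c i * c j * (K i j ^ m / m.factorial)
        = ∑ i, ∑ m ∈ Finset.range N, ∑ j, c i * c j * (K i j ^ m / m.factorial) :=
          Finset.sum_congr rfl fun i _ => Finset.sum_comm
      _ = ∑ m ∈ Finset.range N, ∑ i, ∑ j, c i * c j * (K i j ^ m / m.factorial) :=
          Finset.sum_comm
      _ = ∑ m ∈ Finset.range N, (1 / (m.factorial : ℝ)) * ∑ i, ∑ j, c i * c j * K i j ^ m := by
          refine Finset.sum_congr rfl fun m _ => ?_
          rw [Finset.mul_sum]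
          refine Finset.sum_congr rfl fun i _ => ?_
          rw [Finset.mul_sum]
          exact Finset.sum_congr rfl fun j _ => by ring
  rw [hEq]
  refine Finset.sum_nonneg fun m _ => mul_nonneg (by positivity) ?_
  exact quadpos_pow hKsym hK m c

private lemma quadpos_gaussian {F : Type*} [NormedAddCommGroup F] [InnerProductSpace ℝ F]
    {n : ℕ} (u : Fin n → F) (t : ℝ) (ht : 0 ≤ t) :
    QuadPos (fun i j => Real.exp (-(t * ‖u i - u j‖ ^ 2))) := by
  set K : Fin n → Fin n → ℝ := fun i j => 2 * t * (inner ℝ (u i) (u j) : ℝ) with hKdef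
  have hKsym : ∀ i j, K i j = K j i := fun i j => by
    simp only [hKdef]; rw [real_inner_comm]
  have hKpd : QuadPos K := by
    intro c
    have hrep : (inner ℝ (∑ i, c i • u i) (∑ j, c j • u j) : ℝ)
        = ∑ i, ∑ j, c i * c j * (inner ℝ (u i) (u j) : ℝ) := by
      rw [sum_inner]
      refine Finset.sum_congr rfl fun i _ => ?_
      rw [inner_sum]
      refine Finset.sum_congr rfl fun j _ => ?_
      rw [real_inner_smul_left, real_inner_smul_right]
      ring
    have hrep2 : ∑ i, ∑ j, c i * c j * K i j
        = 2 * t * (inner ℝ (∑ i, c i • u i) (∑ j, c j • u j) : ℝ) := by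
      rw [hrep, Finset.mul_sum]
      refine Finset.sum_congr rfl fun i _ => ?_
      rw [Finset.mul_sum]
      refine Finset.sum_congr rfl fun j _ => ?_
      simp only [hKdef]; ring
    rw [hrep2]
    exact mul_nonneg (by linarith) real_inner_self_nonneg
  have hE := quadpos_exp hKsym hKpd
  intro c
  set b : Fin n → ℝ := fun i => c i * Real.exp (-(t * ‖u i‖ ^ 2)) with hb
  calc (0:ℝ) ≤ ∑ i, ∑ j, b i * b j * Real.exp (K i j) := hE b
    _ = ∑ i, ∑ j, c i * c j * Real.exp (-(t * ‖u i - u j‖ ^ 2)) := by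
        refine Finset.sum_congr rfl fun i _ => Finset.sum_congr rfl fun j _ => ?_
        have hexp : Real.exp (-(t * ‖u i‖ ^ 2)) * Real.exp (-(t * ‖u j‖ ^ 2)) * Real.exp (K i j)
            = Real.exp (-(t * ‖u i - u j‖ ^ 2)) := by
          rw [← Real.exp_add, ← Real.exp_add]
          congr 1
          simp only [hKdef]
          rw [@norm_sub_sq_real F _ _ (u i) (u j)]
          ring
        calc b i * b j * Real.exp (K i j)
            = c i * c j * (Real.exp (-(t * ‖u i‖ ^ 2)) * Real.exp (-(t * ‖u j‖ ^ 2))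
                * Real.exp (K i j)) := by simp only [hb]; ring
          _ = c i * c j * Real.exp (-(t * ‖u i - u j‖ ^ 2)) := by rw [hexp]

private lemma quadpos_exp_neg_of_cnd {n : ℕ} {ψ : Fin n → Fin n → ℝ}
    (hsym : ∀ i j, ψ i j = ψ j i) (hdiag : ∀ i, ψ i i = 0)
    (hcnd : ∀ c : Fin n → ℝ, ∑ i, c i = 0 → ∑ i, ∑ j, c i * c j * ψ i j ≤ 0) :
    QuadPos (fun i j => Real.exp (-ψ i j)) := by
  match n, ψ, hsym, hdiag, hcnd with
  | 0, ψ, _, _, _ => intro c; simp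
  | (n+1), ψ, hsym, hdiag, hcnd =>
    set K : Fin (n+1) → Fin (n+1) → ℝ := fun i j => ψ i 0 + ψ 0 j - ψ i j with hKdef
    have hKsym : ∀ i j, K i j = K j i := fun i j => by
      simp only [hKdef]; rw [hsym i j, hsym i 0, hsym 0 j]; ring
    have hKpd : QuadPos K := by
      intro c
      set s : ℝ := ∑ i, c i with hs
      set d : Fin (n+1) → ℝ := fun i => c i - if i = 0 then s else 0 with hd
      have hdsum : ∀ g : Fin (n+1) → ℝ, ∑ j, d j * g j = (∑ j, c j * g j) - s * g 0 := by
        intro g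
        simp only [hd, sub_mul, Finset.sum_sub_distrib]
        congr 1
        simp [ite_mul]
      have hds : ∑ i, d i = 0 := by
        have := hdsum (fun _ => 1)
        simpa [hs] using this
      have h := hcnd d hds
      set T : Fin (n+1) → ℝ := fun i => ∑ j, c j * ψ i j with hT
      have e1 : ∑ i, ∑ j, d i * d j * ψ i j = (∑ i, c i * (T i - s * ψ i 0)) - s * T 0 := by
        have einner : ∀ i, ∑ j, d i * d j * ψ i j = d i * (T i - s * ψ i 0) := by
          intro i
          calc ∑ j, d i * d j * ψ i j = d i * ∑ j, d j * ψ i j := by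
                rw [Finset.mul_sum]; exact Finset.sum_congr rfl fun j _ => by ring
            _ = d i * (T i - s * ψ i 0) := by rw [hdsum (fun j => ψ i j)]
        rw [Finset.sum_congr rfl fun i _ => einner i, hdsum (fun i => T i - s * ψ i 0)]
        rw [hdiag 0]
        ring
      have e3 : ∑ i, ∑ j, c i * c j * K i j
          = ∑ i, c i * (s * ψ i 0 + T 0 - T i) := by
        refine Finset.sum_congr rfl fun i _ => ?_
        calc ∑ j, c i * c j * K i j = c i * ∑ j, c j * K i j := by
              rw [Finset.mul_sum]; exact Finset.sum_congr rfl fun j _ => by ring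
          _ = c i * (s * ψ i 0 + T 0 - T i) := by
              congr 1
              simp only [hKdef, mul_sub, mul_add, Finset.sum_sub_distrib,
                Finset.sum_add_distrib]
              rw [← Finset.sum_mul]
      have e5 : (∑ i, c i * (s * ψ i 0 + T 0 - T i)) + (∑ i, c i * (T i - s * ψ i 0))
          = s * T 0 := by
        rw [← Finset.sum_add_distrib]
        have h1 : ∑ i, (c i * (s * ψ i 0 + T 0 - T i) + c i * (T i - s * ψ i 0))
            = ∑ i, c i * T 0 := Finset.sum_congr rfl fun i _ => by ring
        rw [h1, ← Finset.sum_mul, ← hs]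
      rw [e3]
      rw [e1] at h
      linarith
    have hE := quadpos_exp hKsym hKpd
    intro c
    set b : Fin (n+1) → ℝ := fun i => c i * Real.exp (-ψ i 0) with hb
    calc (0:ℝ) ≤ ∑ i, ∑ j, b i * b j * Real.exp (K i j) := hE b
      _ = ∑ i, ∑ j, c i * c j * Real.exp (-ψ i j) := by
          refine Finset.sum_congr rfl fun i _ => Finset.sum_congr rfl fun j _ => ?_
          have hexp : Real.exp (-ψ i 0) * Real.exp (-ψ j 0) * Real.exp (K i j)
              = Real.exp (-ψ i j) := by
            rw [← Real.exp_add, ← Real.exp_add]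
            congr 1
            simp only [hKdef]
            rw [hsym 0 j]
            ring
          calc b i * b j * Real.exp (K i j)
              = c i * c j * (Real.exp (-ψ i 0) * Real.exp (-ψ j 0) * Real.exp (K i j)) := by
                simp only [hb]; ring
            _ = c i * c j * Real.exp (-ψ i j) := by rw [hexp]

section Integral

variable {β : ℝ}

/-- integrability of the Lévy-type integrand -/
private lemma lemInt (hβ0 : 0 < β) (hβ1 : β < 1) (t : ℝ) (ht : 0 ≤ t) :
    IntegrableOn (fun l : ℝ => (1 - Real.exp (-(t * l))) * l ^ (-1 - β)) (Set.Ioi 0) := by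
  have hmeas : Measurable (fun l : ℝ => (1 - Real.exp (-(t * l))) * l ^ (-1 - β)) :=
    (measurable_const.sub ((measurable_const.mul measurable_id).neg.exp)).mul
      (measurable_id.pow_const _)
  have hIoi : Set.Ioc (0:ℝ) 1 ∪ Set.Ioi 1 = Set.Ioi 0 := Ioc_union_Ioi_eq_Ioi zero_le_one
  rw [← hIoi]
  refine IntegrableOn.union ?_ ?_
  · -- on Set.Ioc 0 1, dominated by t * l ^ (-β)
    have hint : IntegrableOn (fun l : ℝ => t * l ^ (-β)) (Set.Ioc 0 1) :=
      (((intervalIntegrable_iff_integrableOn_Ioc_of_le zero_le_one).mp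
        (intervalIntegral.intervalIntegrable_rpow' (by linarith)))).const_mul t
    refine Integrable.mono' hint (hmeas.aestronglyMeasurable) ?_
    filter_upwards [ae_restrict_mem measurableSet_Ioc] with l hl
    obtain ⟨hl0, hl1⟩ := hl
    have hrp : (0:ℝ) ≤ l ^ (-1 - β) := Real.rpow_nonneg hl0.le _
    have h1 : 0 ≤ 1 - Real.exp (-(t * l)) := by
      have : Real.exp (-(t * l)) ≤ 1 :=
        Real.exp_le_one_iff.mpr (neg_nonpos.mpr (mul_nonneg ht hl0.le))
      linarith
    have h2 : 1 - Real.exp (-(t * l)) ≤ t * l := by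
      have := Real.add_one_le_exp (-(t * l))
      linarith
    rw [Real.norm_eq_abs, abs_of_nonneg (mul_nonneg h1 hrp)]
    calc (1 - Real.exp (-(t * l))) * l ^ (-1 - β) ≤ (t * l) * l ^ (-1 - β) := by
          exact mul_le_mul_of_nonneg_right h2 hrp
      _ = t * l ^ (-β) := by
          rw [mul_assoc]
          congr 1
          nth_rewrite 1 [← Real.rpow_one l]
          rw [← Real.rpow_add hl0]
          ring_nf
  · -- on Set.Ioi 1, dominated by l ^ (-1-β)
    have hint : IntegrableOn (fun l : ℝ => l ^ (-1 - β)) (Set.Ioi 1) :=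
      integrableOn_Ioi_rpow_of_lt (by linarith) one_pos
    refine Integrable.mono' hint (hmeas.aestronglyMeasurable) ?_
    filter_upwards [ae_restrict_mem measurableSet_Ioi] with l hl
    have hl0 : (0:ℝ) < l := lt_trans one_pos hl
    have hrp : (0:ℝ) ≤ l ^ (-1 - β) := Real.rpow_nonneg hl0.le _
    have h1 : 0 ≤ 1 - Real.exp (-(t * l)) := by
      have : Real.exp (-(t * l)) ≤ 1 :=
        Real.exp_le_one_iff.mpr (neg_nonpos.mpr (mul_nonneg ht hl0.le))
      linarith
    have h2 : 1 - Real.exp (-(t * l)) ≤ 1 := by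
      have := Real.exp_pos (-(t * l)); linarith
    rw [Real.norm_eq_abs, abs_of_nonneg (mul_nonneg h1 hrp)]
    calc (1 - Real.exp (-(t * l))) * l ^ (-1 - β) ≤ 1 * l ^ (-1 - β) :=
          mul_le_mul_of_nonneg_right h2 hrp
      _ = l ^ (-1 - β) := one_mul _

/-- positivity of the basic integral -/
private lemma lemJpos (hβ0 : 0 < β) (hβ1 : β < 1) :
    0 < ∫ l in Set.Ioi (0:ℝ), (1 - Real.exp (-(1 * l))) * l ^ (-1 - β) := by
  have hInt := lemInt hβ0 hβ1 1 zero_le_one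
  have hnn : 0 ≤ᵐ[volume.restrict (Set.Ioi (0:ℝ))]
      fun l : ℝ => (1 - Real.exp (-(1 * l))) * l ^ (-1 - β) := by
    filter_upwards [ae_restrict_mem measurableSet_Ioi] with l hl
    have hl0 : (0:ℝ) < l := hl
    have h1 : Real.exp (-(1 * l)) ≤ 1 := Real.exp_le_one_iff.mpr (by linarith)
    exact mul_nonneg (by linarith) (Real.rpow_nonneg hl0.le _)
  rw [setIntegral_pos_iff_support_of_nonneg_ae hnn hInt]
  have hsub : Set.Ioi (0:ℝ) ⊆ Function.support
      (fun l : ℝ => (1 - Real.exp (-(1 * l))) * l ^ (-1 - β)) ∩ Set.Ioi 0 := by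
    intro l hl
    have hl0 : (0:ℝ) < l := hl
    refine ⟨?_, hl⟩
    have h1 : Real.exp (-(1 * l)) < 1 := by
      rw [Real.exp_lt_one_iff]; linarith
    have : 0 < (1 - Real.exp (-(1 * l))) * l ^ (-1 - β) :=
      mul_pos (by linarith) (Real.rpow_pos_of_pos hl0 _)
    exact ne_of_gt this
  calc (0:ENNReal) < volume (Set.Ioi (0:ℝ)) := by simp
    _ ≤ _ := measure_mono hsub

/-- scaling identity -/
private lemma lemScale (hβ0 : 0 < β) (hβ1 : β < 1) {t : ℝ} (ht : 0 < t) :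
    ∫ l in Set.Ioi (0:ℝ), (1 - Real.exp (-(t * l))) * l ^ (-1 - β)
      = t ^ β * ∫ l in Set.Ioi (0:ℝ), (1 - Real.exp (-(1 * l))) * l ^ (-1 - β) := by
  set g : ℝ → ℝ := fun l => (1 - Real.exp (-(1 * l))) * l ^ (-1 - β) with hg
  have h1 : ∫ x in Set.Ioi (0:ℝ), g (x * t) = t⁻¹ • ∫ x in Set.Ioi (0 * t : ℝ), g x :=
    MeasureTheory.integral_comp_mul_right_Ioi g 0 ht
  have h2 : ∫ x in Set.Ioi (0:ℝ), g (x * t)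
      = t ^ (-1 - β) * ∫ l in Set.Ioi (0:ℝ), (1 - Real.exp (-(t * l))) * l ^ (-1 - β) := by
    rw [← MeasureTheory.integral_const_mul]
    refine setIntegral_congr_fun measurableSet_Ioi fun x hx => ?_
    have hx0 : (0:ℝ) < x := hx
    simp only [hg]
    rw [Real.mul_rpow hx0.le ht.le]
    ring_nf
  have hJ : t ^ (-1 - β) * ∫ l in Set.Ioi (0:ℝ), (1 - Real.exp (-(t * l))) * l ^ (-1 - β)
      = t⁻¹ * ∫ l in Set.Ioi (0:ℝ), g l := by
    rw [← h2, h1]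
    simp
  have htne : t ^ (-1 - β) ≠ 0 := (Real.rpow_pos_of_pos ht _).ne'
  have hfin : ∫ l in Set.Ioi (0:ℝ), (1 - Real.exp (-(t * l))) * l ^ (-1 - β)
      = (t ^ (-1 - β))⁻¹ * (t⁻¹ * ∫ l in Set.Ioi (0:ℝ), g l) := by
    rw [← hJ, ← mul_assoc, inv_mul_cancel₀ htne, one_mul]
  rw [hfin]
  rw [← Real.rpow_neg ht.le, ← Real.rpow_neg_one t, ← mul_assoc, ← Real.rpow_add ht]
  norm_num

end Integral

private lemma inner_double_sum {F : Type*} [NormedAddCommGroup F] [InnerProductSpace ℝ F]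
    {n : ℕ} (u : Fin n → F) (c : Fin n → ℝ) :
    (inner ℝ (∑ i, c i • u i) (∑ j, c j • u j) : ℝ)
      = ∑ i, ∑ j, c i * c j * (inner ℝ (u i) (u j) : ℝ) := by
  rw [sum_inner]
  refine Finset.sum_congr rfl fun i _ => ?_
  rw [inner_sum]
  refine Finset.sum_congr rfl fun j _ => ?_
  rw [real_inner_smul_left, real_inner_smul_right]
  ring

private lemma cnd_sq {F : Type*} [NormedAddCommGroup F] [InnerProductSpace ℝ F]
    {n : ℕ} (u : Fin n → F) (c : Fin n → ℝ) (hc : ∑ i, c i = 0) :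
    ∑ i, ∑ j, c i * c j * (‖u i - u j‖ ^ 2 : ℝ) ≤ 0 := by
  have key : ∀ i j : Fin n, c i * c j * (‖u i - u j‖ ^ 2 : ℝ)
      = c i * c j * ‖u i‖ ^ 2 + c i * c j * ‖u j‖ ^ 2
        - 2 * (c i * c j * (inner ℝ (u i) (u j) : ℝ)) := by
    intro i j
    rw [@norm_sub_sq_real F _ _ (u i) (u j)]
    ring
  rw [Finset.sum_congr rfl fun i _ => Finset.sum_congr rfl fun j _ => key i j]
  simp only [Finset.sum_add_distrib, Finset.sum_sub_distrib]
  have hA : ∑ i, ∑ j, c i * c j * ‖u i‖ ^ 2 = 0 := by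
    refine Finset.sum_eq_zero fun i _ => ?_
    have : ∑ j, c i * c j * ‖u i‖ ^ 2 = (c i * ‖u i‖ ^ 2) * ∑ j, c j := by
      rw [Finset.mul_sum]; exact Finset.sum_congr rfl fun j _ => by ring
    rw [this, hc, mul_zero]
  have hB : ∑ i, ∑ j, c i * c j * ‖u j‖ ^ 2 = 0 := by
    rw [Finset.sum_comm]
    refine Finset.sum_eq_zero fun j _ => ?_
    have : ∑ i, c i * c j * ‖u j‖ ^ 2 = (c j * ‖u j‖ ^ 2) * ∑ i, c i := by
      rw [Finset.mul_sum]; exact Finset.sum_congr rfl fun i _ => by ring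
    rw [this, hc, mul_zero]
  have hC : ∑ i, ∑ j, 2 * (c i * c j * (inner ℝ (u i) (u j) : ℝ))
      = 2 * (inner ℝ (∑ i, c i • u i) (∑ j, c j • u j) : ℝ) := by
    rw [inner_double_sum, Finset.mul_sum]
    exact Finset.sum_congr rfl fun i _ => by rw [Finset.mul_sum]
  rw [hA, hB, hC]
  have hnn : (0:ℝ) ≤ inner ℝ (∑ i, c i • u i) (∑ j, c j • u j) := real_inner_self_nonneg
  linarith

private lemma cnd_rpow_lt {F : Type*} [NormedAddCommGroup F] [InnerProductSpace ℝ F]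
    {n : ℕ} (u : Fin n → F) {β : ℝ} (hβ0 : 0 < β) (hβ1 : β < 1)
    (c : Fin n → ℝ) (hc : ∑ i, c i = 0) :
    ∑ i, ∑ j, c i * c j * ((‖u i - u j‖ ^ 2 : ℝ) ^ β) ≤ 0 := by
  set J : ℝ := ∫ l in Set.Ioi (0:ℝ), (1 - Real.exp (-(1 * l))) * l ^ (-1 - β) with hJ
  have hJpos : 0 < J := lemJpos hβ0 hβ1
  have hrep : ∀ i j : Fin n, (‖u i - u j‖ ^ 2 : ℝ) ^ β
      = J⁻¹ * ∫ l in Set.Ioi (0:ℝ),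
          (1 - Real.exp (-((‖u i - u j‖ ^ 2 : ℝ) * l))) * l ^ (-1 - β) := by
    intro i j
    rcases eq_or_lt_of_le (by positivity : (0:ℝ) ≤ ‖u i - u j‖ ^ 2) with h | h
    · rw [← h, Real.zero_rpow hβ0.ne']
      symm
      simp
    · rw [lemScale hβ0 hβ1 h, ← hJ]
      field_simp
  have hint : ∀ i j : Fin n, Integrable
      (fun l : ℝ => c i * c j * ((1 - Real.exp (-((‖u i - u j‖ ^ 2 : ℝ) * l))) * l ^ (-1 - β)))
      (volume.restrict (Set.Ioi 0)) :=
    fun i j => ((lemInt hβ0 hβ1 _ (by positivity)).const_mul _)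
  have hs1 : ∑ i, ∑ j, c i * c j * ((‖u i - u j‖ ^ 2 : ℝ) ^ β)
      = J⁻¹ * ∑ i, ∑ j, ∫ l in Set.Ioi (0:ℝ),
          c i * c j * ((1 - Real.exp (-((‖u i - u j‖ ^ 2 : ℝ) * l))) * l ^ (-1 - β)) := by
    rw [Finset.mul_sum]
    refine Finset.sum_congr rfl fun i _ => ?_
    rw [Finset.mul_sum]
    refine Finset.sum_congr rfl fun j _ => ?_
    rw [hrep i j, MeasureTheory.integral_const_mul]
    ring
  have hs2 : ∑ i, ∑ j, (∫ l in Set.Ioi (0:ℝ),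
        c i * c j * ((1 - Real.exp (-((‖u i - u j‖ ^ 2 : ℝ) * l))) * l ^ (-1 - β)))
      = ∫ l in Set.Ioi (0:ℝ), ∑ i, ∑ j,
        c i * c j * ((1 - Real.exp (-((‖u i - u j‖ ^ 2 : ℝ) * l))) * l ^ (-1 - β)) := by
    rw [MeasureTheory.integral_finset_sum _
      (fun i _ => integrable_finset_sum _ (fun j _ => hint i j))]
    exact Finset.sum_congr rfl fun i _ =>
      (MeasureTheory.integral_finset_sum _ (fun j _ => hint i j)).symm
  have hnonpos : (∫ l in Set.Ioi (0:ℝ), ∑ i, ∑ j,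
      c i * c j * ((1 - Real.exp (-((‖u i - u j‖ ^ 2 : ℝ) * l))) * l ^ (-1 - β))) ≤ 0 := by
    apply MeasureTheory.integral_nonpos_of_ae
    filter_upwards [ae_restrict_mem measurableSet_Ioi] with l hl
    have hl0 : (0:ℝ) < l := hl
    have hg := quadpos_gaussian u l hl0.le c
    have hpow : (0:ℝ) ≤ l ^ (-1 - β) := Real.rpow_nonneg hl0.le _
    have expand : ∀ i j : Fin n,
        c i * c j * ((1 - Real.exp (-((‖u i - u j‖ ^ 2 : ℝ) * l))) * l ^ (-1 - β))
        = l ^ (-1 - β) * (c i * c j)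
          - l ^ (-1 - β) * (c i * c j * Real.exp (-(l * ‖u i - u j‖ ^ 2))) := by
      intro i j
      rw [mul_comm ((‖u i - u j‖:ℝ) ^ 2) l]
      ring
    have hg' : 0 ≤ ∑ i, ∑ j, c i * c j * Real.exp (-(l * ‖u i - u j‖ ^ 2)) := by
      simpa using hg
    rw [Finset.sum_congr rfl fun i _ => Finset.sum_congr rfl fun j _ => expand i j]
    have hAB : ∑ i, ∑ j, (l ^ (-1-β) * (c i * c j)
          - l ^ (-1-β) * (c i * c j * Real.exp (-(l * ‖u i - u j‖ ^ 2))))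
        = l ^ (-1-β) * ((∑ i, c i) * (∑ j, c j))
          - l ^ (-1-β) * ∑ i, ∑ j, c i * c j * Real.exp (-(l * ‖u i - u j‖ ^ 2)) := by
      simp only [Finset.sum_sub_distrib]
      congr 1
      · rw [Finset.sum_mul_sum, Finset.mul_sum]
        exact Finset.sum_congr rfl fun i _ => by rw [Finset.mul_sum]
      · rw [Finset.mul_sum]
        exact Finset.sum_congr rfl fun i _ => by rw [Finset.mul_sum]
    rw [hAB, hc, zero_mul, mul_zero, zero_sub]
    simpa using neg_nonpos.mpr (mul_nonneg hpow hg')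
  rw [hs1, hs2]
  nlinarith [inv_nonneg.mpr hJpos.le]

/-- **Distance substitution kernels from Hilbertian pseudo-distances are positive definite.**
Let `M` be a set, `F` a real Hilbert space, `Φ : M → F`, and `d(x,y) = ‖Φ(x) − Φ(y)‖_F` the
induced Hilbertian pseudo-distance.  Then for every `γ ≥ 0` and `β ∈ [0,1]`, the kernel
`K(x,y) = exp(−γ·d(x,y)^{2β})` is positive definite: for every `n`, all `x₁, …, xₙ ∈ M` and
all `c ∈ ℝⁿ`, `∑_{i,j} cᵢ cⱼ K(xᵢ, xⱼ) ≥ 0`. -/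
theorem gaussian_like_distance_substitution_kernel_posdef
    {M : Type*} {F : Type*} [NormedAddCommGroup F] [InnerProductSpace ℝ F] [CompleteSpace F]
    (Φ : M → F) (γ : ℝ) (hγ : 0 ≤ γ) (β : ℝ) (hβ : β ∈ Set.Icc (0 : ℝ) 1) :
    ∀ (n : ℕ) (x : Fin n → M) (c : Fin n → ℝ),
      0 ≤ ∑ i, ∑ j, c i * c j * Real.exp (-γ * ‖Φ (x i) - Φ (x j)‖ ^ (2 * β)) := by
  obtain ⟨hβ0, hβ1⟩ := hβ
  intro n x c
  set u : Fin n → F := fun i => Φ (x i) with hu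
  rcases eq_or_lt_of_le hβ0 with hz | hpos
  · -- β = 0 : constant kernel
    have hconst : ∀ i j : Fin n,
        Real.exp (-γ * ‖u i - u j‖ ^ (2 * β)) = Real.exp (-γ) := by
      intro i j
      rw [← hz]
      norm_num
    rw [Finset.sum_congr rfl fun i _ => Finset.sum_congr rfl fun j _ =>
      (by rw [hconst i j] : c i * c j * Real.exp (-γ * ‖u i - u j‖ ^ (2 * β))
        = c i * c j * Real.exp (-γ))]
    have hfold : ∑ i, ∑ j, c i * c j * Real.exp (-γ)
        = ((∑ i, c i) * (∑ j, c j)) * Real.exp (-γ) := by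
      rw [Finset.sum_mul_sum, Finset.sum_mul]
      exact Finset.sum_congr rfl fun i _ => by rw [Finset.sum_mul]
    rw [hfold]
    exact mul_nonneg (mul_self_nonneg _) (Real.exp_pos _).le
  · -- 0 < β
    set ψ : Fin n → Fin n → ℝ := fun i j => γ * ((‖u i - u j‖ ^ 2 : ℝ) ^ β) with hψ
    have hsym : ∀ i j, ψ i j = ψ j i := by
      intro i j
      simp only [hψ]
      rw [norm_sub_rev]
    have hdiag : ∀ i, ψ i i = 0 := by
      intro i
      simp only [hψ, sub_self, norm_zero]
      rw [zero_pow (by norm_num : (2:ℕ) ≠ 0), Real.zero_rpow hpos.ne', mul_zero]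
    have hcnd : ∀ b : Fin n → ℝ, ∑ i, b i = 0 → ∑ i, ∑ j, b i * b j * ψ i j ≤ 0 := by
      intro b hb
      have hfact : ∑ i, ∑ j, b i * b j * ψ i j
          = γ * ∑ i, ∑ j, b i * b j * ((‖u i - u j‖ ^ 2 : ℝ) ^ β) := by
        rw [Finset.mul_sum]
        refine Finset.sum_congr rfl fun i _ => ?_
        rw [Finset.mul_sum]
        refine Finset.sum_congr rfl fun j _ => ?_
        simp only [hψ]
        ring
      rw [hfact]
      rcases eq_or_lt_of_le hβ1 with h1 | h1
      · -- β = 1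
        have : ∑ i, ∑ j, b i * b j * ((‖u i - u j‖ ^ 2 : ℝ) ^ β)
            = ∑ i, ∑ j, b i * b j * (‖u i - u j‖ ^ 2 : ℝ) := by
          refine Finset.sum_congr rfl fun i _ => Finset.sum_congr rfl fun j _ => ?_
          rw [h1, Real.rpow_one]
        rw [this]
        exact mul_nonpos_iff.mpr (Or.inl ⟨hγ, cnd_sq u b hb⟩)
      · exact mul_nonpos_iff.mpr (Or.inl ⟨hγ, cnd_rpow_lt u hpos h1 b hb⟩)
    have hq := quadpos_exp_neg_of_cnd hsym hdiag hcnd c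
    have hmatch : ∀ i j : Fin n,
        Real.exp (-ψ i j) = Real.exp (-γ * ‖u i - u j‖ ^ (2 * β)) := by
      intro i j
      congr 1
      simp only [hψ]
      rw [show (2:ℝ) * β = ((2:ℕ):ℝ) * β by norm_num,
        Real.rpow_mul (norm_nonneg _), Real.rpow_natCast]
      ring
    calc (0:ℝ) ≤ ∑ i, ∑ j, c i * c j * Real.exp (-ψ i j) := hq
      _ = ∑ i, ∑ j, c i * c j * Real.exp (-γ * ‖u i - u j‖ ^ (2 * β)) :=
        Finset.sum_congr rfl fun i _ => Finset.sum_congr rfl fun j _ => by rw [hmatch i j]
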